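/- If L(x) = Σ a_i x^{q^i} is a linearized permutation polynomial over F_{q^n} with compositional inverse L^{-1}(x) = Σ b_i x^{q^i}, then the Dickson matrix of L^{-1} is the matrix inverse of the Dickson matrix of L: D_{L^{-1}} = D_L^{-1}. -/

import Mathlib

open Finset Polynomial


lemma aux_coeff {F : Type*} [Field F] [Fintype F] (q n : ℕ) (hq2 : 2 ≤ q)
    (hF : Fintype.card F = q ^ n) (c : ℕ → F)
    (h : ∀ x : F, ∑ k ∈ Finset.range n, c k * x ^ q ^ k = x) :
    ∀ k < n, c k = if k = 0 then 1 else 0 := by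
  intro k hk
  have hn : 0 < n := lt_of_le_of_lt (Nat.zero_le k) hk
  set P : Polynomial F :=
    (∑ j ∈ Finset.range n, Polynomial.C (c j) * Polynomial.X ^ q ^ j) - Polynomial.X with hP
  have hdeg : P.natDegree < Fintype.card F := by
    rw [hF]
    have hle : ∀ j ∈ Finset.range n, q ^ j ≤ q ^ (n - 1) := fun j hj =>
      Nat.pow_le_pow_right (by omega) (by simp only [Finset.mem_range] at hj; omega)
    have h1 : (∑ j ∈ Finset.range n, Polynomial.C (c j) * Polynomial.X ^ q ^ j).natDegree
        ≤ q ^ (n - 1) := by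
      refine Polynomial.natDegree_sum_le_of_forall_le _ _ fun j hj => ?_
      refine le_trans (Polynomial.natDegree_C_mul_le _ _) ?_
      rw [Polynomial.natDegree_X_pow]
      exact hle j hj
    have h2 : (Polynomial.X : Polynomial F).natDegree ≤ q ^ (n - 1) := by
      rw [Polynomial.natDegree_X]
      exact Nat.one_le_pow _ _ (by omega)
    have h3 : P.natDegree ≤ q ^ (n - 1) :=
      le_trans (Polynomial.natDegree_sub_le _ _) (max_le h1 h2)
    exact lt_of_le_of_lt h3 (Nat.pow_lt_pow_right (by omega) (by omega))
  have hzero : P = 0 := by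
    refine Polynomial.eq_zero_of_natDegree_lt_card_of_eval_eq_zero P Function.injective_id
      (fun x => ?_) hdeg
    simp only [hP, Polynomial.eval_sub, Polynomial.eval_finset_sum, Polynomial.eval_mul,
      Polynomial.eval_C, Polynomial.eval_pow, Polynomial.eval_X, id]
    rw [h x, sub_self]
  have hcoeff : P.coeff (q ^ k) = 0 := by rw [hzero, Polynomial.coeff_zero]
  rw [hP, Polynomial.coeff_sub, Polynomial.finset_sum_coeff] at hcoeff
  have hsum : ∑ j ∈ Finset.range n, (Polynomial.C (c j) * Polynomial.X ^ q ^ j).coeff (q ^ k)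
      = c k := by
    rw [Finset.sum_eq_single_of_mem k (Finset.mem_range.2 hk)]
    · simp [Polynomial.coeff_C_mul, Polynomial.coeff_X_pow]
    · intro j hj hjk
      simp only [Polynomial.coeff_C_mul, Polynomial.coeff_X_pow]
      rw [if_neg, mul_zero]
      exact fun hqq => hjk (Nat.pow_right_injective hq2 hqq.symm)
  rw [hsum] at hcoeff
  have hX : (Polynomial.X : Polynomial F).coeff (q ^ k) = if k = 0 then 1 else 0 := by
    rw [← pow_one (Polynomial.X : Polynomial F), Polynomial.coeff_X_pow]
    by_cases hk0 : k = 0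
    · simp [hk0]
    · rw [if_neg hk0, if_neg]
      intro hqe
      have := Nat.one_lt_pow hk0 (by omega : 1 < q)
      omega
  rw [hX] at hcoeff
  exact sub_eq_zero.mp hcoeff

lemma aux_pow_mod {F : Type*} [Field F] [Fintype F] (q n : ℕ)
    (hF : Fintype.card F = q ^ n) (x : F) (s : ℕ) : x ^ q ^ s = x ^ q ^ (s % n) := by
  have h1 : ∀ t : ℕ, x ^ (q ^ n) ^ t = x := by
    intro t; rw [← hF]; exact FiniteField.pow_card_pow t x
  conv_lhs => rw [← Nat.div_add_mod s n]
  rw [pow_add, pow_mul, pow_mul, h1]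

lemma aux_idx (n : ℕ) [NeZero n] (i j : Fin n) :
    (n + (j : ℕ) - (i : ℕ)) % n = ((j - i : Fin n) : ℕ) := by
  rw [Fin.sub_def]
  have := i.isLt
  congr 1
  omega

/-- If `L(x) = ∑ a_i x^{q^i}` is a linearized permutation polynomial over `F_{q^n}` with
compositional inverse `L⁻¹(x) = ∑ b_i x^{q^i}`, then `D_{L⁻¹} = D_L⁻¹`. -/
theorem stmt_16 (q n : ℕ) (hq : IsPrimePow q) (hn : 0 < n)
    (F : Type*) [Field F] [Fintype F] (hF : Fintype.card F = q ^ n) (a b : ℕ → F)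
    (hbij : Function.Bijective (fun x : F => ∑ i ∈ Finset.range n, a i * x ^ q ^ i))
    (hinv : ∀ x : F,
      (∑ i ∈ Finset.range n, b i * (∑ j ∈ Finset.range n, a j * x ^ q ^ j) ^ q ^ i) = x ∧
      (∑ i ∈ Finset.range n, a i * (∑ j ∈ Finset.range n, b j * x ^ q ^ j) ^ q ^ i) = x) :
    (Matrix.of fun i j : Fin n => (b ((n + (j : ℕ) - (i : ℕ)) % n)) ^ q ^ (i : ℕ)) =
      (Matrix.of fun i j : Fin n => (a ((n + (j : ℕ) - (i : ℕ)) % n)) ^ q ^ (i : ℕ))⁻¹ := by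
  haveI : NeZero n := ⟨hn.ne'⟩
  obtain ⟨p, e, hp, he, rfl⟩ := hq
  have hp' : p.Prime := hp.nat_prime
  have hq2 : 2 ≤ p ^ e := Nat.one_lt_pow he.ne' hp'.one_lt
  haveI := Fact.mk hp'
  haveI hcharp : CharP F p := by
    obtain ⟨m, hrp, hcard⟩ := FiniteField.card F (ringChar F)
    have hpr : p = ringChar F := by
      have hdvd : p ∣ ringChar F ^ (m : ℕ) := by
        rw [← hcard, hF, ← pow_mul]
        exact dvd_pow_self p (by positivity)
      exact (Nat.prime_dvd_prime_iff_eq hp' hrp).mp (hp'.dvd_of_dvd_pow hdvd)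
    rw [hpr]; exact ringChar.charP F
  haveI : ExpChar F p := ExpChar.prime hp'
  have hsum_pow : ∀ {ι : Type} (s : Finset ι) (f : ι → F) (i : ℕ),
      (∑ m ∈ s, f m) ^ (p ^ e) ^ i = ∑ m ∈ s, f m ^ (p ^ e) ^ i := by
    intro ι s f i
    rw [show ((p : ℕ) ^ e) ^ i = p ^ (e * i) from (pow_mul p e i).symm]
    exact sum_pow_char_pow (p := p) (n := e * i) s f
  -- composition coefficients
  have hcomp : ∀ x : F,
      ∑ t : Fin n, (∑ i : Fin n, b i * a ((t - i : Fin n) : ℕ) ^ (p ^ e) ^ (i : ℕ))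
        * x ^ (p ^ e) ^ (t : ℕ) = x := by
    intro x
    have h0 := (hinv x).1
    have hA : ∀ i : ℕ, (∑ j ∈ Finset.range n, a j * x ^ (p ^ e) ^ j) ^ (p ^ e) ^ i
        = ∑ j ∈ Finset.range n, a j ^ (p ^ e) ^ i * x ^ (p ^ e) ^ ((i + j) % n) := by
      intro i
      rw [hsum_pow]
      refine Finset.sum_congr rfl fun j hj => ?_
      calc (a j * x ^ (p ^ e) ^ j) ^ (p ^ e) ^ i
          = a j ^ (p ^ e) ^ i * (x ^ (p ^ e) ^ j) ^ (p ^ e) ^ i := mul_pow _ _ _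
        _ = a j ^ (p ^ e) ^ i * x ^ ((p ^ e) ^ j * (p ^ e) ^ i) := by rw [pow_mul]
        _ = a j ^ (p ^ e) ^ i * x ^ (p ^ e) ^ (i + j) := by rw [← pow_add, add_comm j i]
        _ = a j ^ (p ^ e) ^ i * x ^ (p ^ e) ^ ((i + j) % n) := by
            rw [aux_pow_mod (p ^ e) n hF x (i + j)]
    simp only [hA, Finset.mul_sum] at h0
    rw [Finset.sum_range] at h0
    simp only [Finset.sum_range] at h0
    have hD : ∀ i : Fin n,
        (∑ j : Fin n, b (i : ℕ) * (a (j : ℕ) ^ (p ^ e) ^ (i : ℕ)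
            * x ^ (p ^ e) ^ (((i : ℕ) + (j : ℕ)) % n)))
        = ∑ t : Fin n, b (i : ℕ) * (a ((t - i : Fin n) : ℕ) ^ (p ^ e) ^ (i : ℕ)
            * x ^ (p ^ e) ^ (t : ℕ)) := by
      intro i
      refine Fintype.sum_equiv (Equiv.addLeft i) _ _ fun j => ?_
      simp only [Equiv.coe_addLeft, add_sub_cancel_left, Fin.val_add]
    simp only [hD] at h0
    rw [Finset.sum_comm] at h0
    calc ∑ t : Fin n, (∑ i : Fin n, b (i : ℕ) * a ((t - i : Fin n) : ℕ)
            ^ (p ^ e) ^ (i : ℕ)) * x ^ (p ^ e) ^ (t : ℕ)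
        = ∑ t : Fin n, ∑ i : Fin n, b (i : ℕ) * (a ((t - i : Fin n) : ℕ)
            ^ (p ^ e) ^ (i : ℕ) * x ^ (p ^ e) ^ (t : ℕ)) := by
          refine Finset.sum_congr rfl fun t _ => ?_
          rw [Finset.sum_mul]
          exact Finset.sum_congr rfl fun i _ => by ring
      _ = x := h0
  -- extract coefficients
  set c : ℕ → F := fun t =>
    if h : t < n then
      ∑ i : Fin n, b (i : ℕ) * a (((⟨t, h⟩ : Fin n) - i : Fin n) : ℕ) ^ (p ^ e) ^ (i : ℕ)
    else 0 with hc
  have hcsum : ∀ x : F, ∑ k ∈ Finset.range n, c k * x ^ (p ^ e) ^ k = x := by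
    intro x
    rw [Finset.sum_range]
    refine Eq.trans ?_ (hcomp x)
    refine Finset.sum_congr rfl fun k _ => ?_
    congr 1
    simp only [hc, k.isLt, dif_pos, Fin.eta]
  have H0 := aux_coeff (p ^ e) n hq2 hF c hcsum
  have H1 : ∀ t : Fin n,
      (∑ i : Fin n, b (i : ℕ) * a ((t - i : Fin n) : ℕ) ^ (p ^ e) ^ (i : ℕ))
        = if t = 0 then 1 else 0 := by
    intro t
    have h1 := H0 (t : ℕ) t.isLt
    simp only [hc, t.isLt, dif_pos, Fin.eta] at h1
    rw [h1]
    by_cases ht : t = 0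
    · simp [ht]
    · rw [if_neg ht, if_neg (fun h => ht (Fin.val_eq_zero_iff.mp h))]
  -- matrix computation
  refine (Matrix.inv_eq_left_inv ?_).symm
  ext i k
  rw [Matrix.mul_apply, Matrix.one_apply]
  simp only [Matrix.of_apply, aux_idx]
  have hstep : ∀ m : Fin n,
      (b (m : ℕ) * a ((k - i - m : Fin n) : ℕ) ^ (p ^ e) ^ (m : ℕ)) ^ (p ^ e) ^ (i : ℕ)
        = b ((i + m - i : Fin n) : ℕ) ^ (p ^ e) ^ (i : ℕ)
          * a ((k - (i + m) : Fin n) : ℕ) ^ (p ^ e) ^ ((i + m : Fin n) : ℕ) := by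
    intro m
    rw [mul_pow, add_sub_cancel_left, sub_add_eq_sub_sub]
    congr 1
    calc (a ((k - i - m : Fin n) : ℕ) ^ (p ^ e) ^ (m : ℕ)) ^ (p ^ e) ^ (i : ℕ)
        = a ((k - i - m : Fin n) : ℕ) ^ ((p ^ e) ^ (m : ℕ) * (p ^ e) ^ (i : ℕ)) := by
          rw [pow_mul]
      _ = a ((k - i - m : Fin n) : ℕ) ^ (p ^ e) ^ ((m : ℕ) + (i : ℕ)) := by rw [← pow_add]
      _ = a ((k - i - m : Fin n) : ℕ) ^ (p ^ e) ^ (((m : ℕ) + (i : ℕ)) % n) :=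
          aux_pow_mod (p ^ e) n hF _ _
      _ = a ((k - i - m : Fin n) : ℕ) ^ (p ^ e) ^ ((i + m : Fin n) : ℕ) := by
          rw [Fin.val_add, Nat.add_comm (m : ℕ) (i : ℕ)]
  rw [← Fintype.sum_equiv (Equiv.addLeft i)
    (fun m : Fin n =>
      (b (m : ℕ) * a ((k - i - m : Fin n) : ℕ) ^ (p ^ e) ^ (m : ℕ)) ^ (p ^ e) ^ (i : ℕ))
    (fun j : Fin n =>
      b ((j - i : Fin n) : ℕ) ^ (p ^ e) ^ (i : ℕ)
        * a ((k - j : Fin n) : ℕ) ^ (p ^ e) ^ (j : ℕ))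
    (fun m => by simpa using hstep m)]
  rw [← hsum_pow, H1 (k - i)]
  by_cases hik : k = i
  · rw [if_pos (by rw [hik, sub_self]), if_pos hik.symm, one_pow]
  · rw [if_neg (fun h => hik (sub_eq_zero.mp h)), if_neg (fun h => hik h.symm),
      zero_pow (by positivity)]
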